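/- Define ρ̃(a,b,c,d,e,f) to be the 2×2 real matrix with entries ρ̃₁₁ = (a−d+1)d + b(f−c), ρ̃₁₂ = cd − be + f, ρ̃₂₁ = c(d−1) − be, ρ̃₂₂ = −c² + fc + (a−d−1)e. Define V₁(r,s,t) = (s, t, r, 0, 0, r) and V₂(u,v,w) = (1 − 2uw + vw², w(1 − uw + vw²), u − vw, −vw², v, u + vw). Then { x ∈ ℝ⁶ : ρ̃(x) + ρ̃(x)ᵀ = 0 and ρ̃(x) ≠ 0 } = { V₁(r,s,t) : r ≠ 0, s,t ∈ ℝ } ∪ { V₂(u,v,w) : u ≠ 0, v,w ∈ ℝ }. -/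

import Mathlib

open Matrix

/-- The space of Type B models: `(a,b,c,d,e,f)` records the Christoffel symbols
`Γᵢⱼᵏ = Aᵢⱼᵏ / x¹`. -/
abbrev R6 : Type := ℝ × ℝ × ℝ × ℝ × ℝ × ℝ

/-- `(x¹)²` times the Ricci tensor of the Type B model `𝒩(a,b,c,d,e,f)`. -/
def ρB : R6 → Matrix (Fin 2) (Fin 2) ℝ
  | (a, b, c, d, e, f) =>
    !![(a-d+1)*d + b*(f-c), c*d - b*e + f;
       c*(d-1) - b*e, -c^2 + f*c + (a-d-1)*e]

def V1 : ℝ → ℝ → ℝ → R6 := fun r s t => (s, t, r, 0, 0, r)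

def V2 : ℝ → ℝ → ℝ → R6 := fun u v w =>
  (1 - 2*u*w + v*w^2, w*(1 - u*w + v*w^2), u - v*w, -v*w^2, v, u + v*w)

theorem stmt_17 :
    {x : R6 | ρB x + (ρB x)ᵀ = 0 ∧ ρB x ≠ 0} =
      {x : R6 | ∃ r s t : ℝ, r ≠ 0 ∧ x = V1 r s t} ∪
      {x : R6 | ∃ u v w : ℝ, u ≠ 0 ∧ x = V2 u v w} := by
  ext ⟨a, b, c, d, e, f⟩
  simp only [Set.mem_setOf_eq, Set.mem_union]
  constructor
  · rintro ⟨hsym, hne⟩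
    simp only [ρB] at hsym hne
    have h11 : 2 * ((a-d+1)*d + b*(f-c)) = 0 := by
      have := congrFun (congrFun hsym 0) 0
      simp [Matrix.add_apply, Matrix.transpose_apply, Matrix.vecHead, Matrix.vecTail] at this
      linarith
    have h12 : (c*d - b*e + f) + (c*(d-1) - b*e) = 0 := by
      have := congrFun (congrFun hsym 0) 1
      simp [Matrix.add_apply, Matrix.transpose_apply, Matrix.vecHead, Matrix.vecTail] at this
      linarith
    have h22 : 2 * (-c^2 + f*c + (a-d-1)*e) = 0 := by
      have := congrFun (congrFun hsym 1) 1
      simp [Matrix.add_apply, Matrix.transpose_apply, Matrix.vecHead, Matrix.vecTail] at this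
      linarith
    have hoff : c*d - b*e + f ≠ 0 := by
      intro h0
      apply hne
      ext i j
      fin_cases i <;> fin_cases j <;>
        simp [Matrix.zero_apply] <;> linarith
    by_cases he : e = 0
    · subst he
      left
      have hc : c ≠ 0 := by intro hc; subst hc; apply hoff; linarith
      have hf : f = c := by
        rcases mul_eq_zero.mp (show c * (f - c) = 0 by nlinarith) with h | h
        · exact absurd h hc
        · linarith
      have hd : d = 0 := by
        have h2 : (2 * c) * d = 0 := by nlinarith
        rcases mul_eq_zero.mp h2 with h | h
        · rcases mul_eq_zero.mp h with h | h
          · norm_num at h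
          · exact absurd h hc
        · exact h
      exact ⟨c, a, b, hc, by simp [V1, hd, hf]⟩
    · right
      refine ⟨(c + f)/2, e, (f - c)/(2*e), ?_, ?_⟩
      · intro h0
        apply hoff
        have hcf : c + f = 0 := by linarith
        linarith
      · have hd : 4 * e * d = -(f - c)^2 := by
          linear_combination e*h11 - d*h22 + (f-c)*h12
        simp only [V2, Prod.mk.injEq]
        refine ⟨?_, ?_, ?_, ?_, trivial, ?_⟩
        · field_simp
          linear_combination 2*h22 + hd
        · field_simp
          linear_combination -4*e*h12 + 2*c*hd
        · field_simp
          ring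
        · field_simp
          linear_combination hd
        · field_simp
          ring
  · rintro (⟨r, s, t, hr, hx⟩ | ⟨u, v, w, hu, hx⟩) <;>
      simp only [V1, V2, Prod.mk.injEq] at hx <;>
      obtain ⟨rfl, rfl, rfl, rfl, rfl, rfl⟩ := hx <;>
      constructor
    · ext i j
      fin_cases i <;> fin_cases j <;>
        simp [ρB, Matrix.add_apply, Matrix.transpose_apply, Matrix.vecHead, Matrix.vecTail] <;>
        ring
    · intro h
      have := congrFun (congrFun h 0) 1
      simp [ρB] at this
      exact hr (by linarith)
    · ext i j
      fin_cases i <;> fin_cases j <;>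
        simp [ρB, Matrix.add_apply, Matrix.transpose_apply, Matrix.vecHead, Matrix.vecTail] <;>
        ring
    · intro h
      have := congrFun (congrFun h 0) 1
      simp [ρB] at this
      exact hu (by nlinarith)
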